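/- In the algebra A = H*(V,ℂ) for V = ℙ(𝒪_S ⊕ K_S) as above (with the cup product, treating only the classical product), the kernels J_k = Ker(Δ₀^{∪k} ∪ ·) are: J₁ = ℂΓ_{r+1}^∨ ⊕ ⊕ᵢℂΓ_i^∨ ⊕ ℂΔ_{r+1}; J₂ = ⊕ᵢℂ(Γᵢ − (bᵢ^∨/κ)Δ₀) ⊕ ℂΓ_{r+1} ⊕ ⊕ᵢℂΔᵢ ⊕ ℂΔ_{r+1}; J₃ = H^{≥2}(V); J₄ = A; where κ = Σ bᵢbᵢ^∨ ≠ 0. Consequently the filtration I_k = (Δ₀) + J_k is: I₀ = (Δ₀), I₁ = ℂΓ_{r+1}^∨ ⊕ ℂΔ₀ ⊕ ℂΓ_{r+1} ⊕ ⊕ᵢℂΔᵢ ⊕ ℂΔ_{r+1}, I₂ = I₃ = H^{≥2}(V), I₄ = A. -/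

import Mathlib

/-- in `A = H*(V,ℂ)` for `V = ℙ(𝒪_S ⊕ K_S)` (classical cup
product), the kernels `J_k = Ker(Δ₀^k ∪ ·)` and the filtration
`I_k = (Δ₀) + J_k` are as computed in §7.4 of the paper. -/
theorem stmt16 {A : Type*} [CommRing A] [Algebra ℂ A]
    (r : ℕ) (Γ0 Δ0 Γtop Δtop : A) (Γ Δ : Fin r → A)
    (c : Fin r → Fin r → ℂ) (a : Fin r → Fin r → ℂ) (b : Fin r → ℂ)
    (bv : Fin r → ℂ) (hbv : ∀ i, bv i = ∑ j, b j * c j i)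
    (κ : ℂ) (hκ : κ = ∑ i, b i * bv i) (hκne : κ ≠ 0)
    (hcsymm : ∀ i j, c i j = c j i)
    (hainv : ∀ i j, (∑ k, a i k * c k j) = if i = j then (1 : ℂ) else 0)
    -- cup product relations
    (hone : Γ0 = 1)
    (hGG : ∀ i j, Γ i * Γ j = c i j • Γtop)
    (hGT : ∀ i, Γ i * Γtop = 0)
    (hGD : ∀ i j, Γ i * Δ j = c i j • Δtop)
    (hGD0 : ∀ i, Γ i * Δ0 = Δ i)
    (hTD0 : Γtop * Δ0 = Δtop)
    (hTT : Γtop * Γtop = 0)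
    (hTD : ∀ j, Γtop * Δ j = 0)
    (hD00 : Δ0 * Δ0 = ∑ i, b i • Δ i)
    (hD0D : ∀ j, Δ0 * Δ j = bv j • Δtop)
    (hDD : ∀ i j, Δ i * Δ j = 0)
    (hGDt : ∀ i, Γ i * Δtop = 0)
    (hD0Dt : Δ0 * Δtop = 0)
    (hTDt : Γtop * Δtop = 0)
    (hDDt : ∀ i, Δ i * Δtop = 0)
    (hDtDt : Δtop * Δtop = 0)
    -- the listed classes form a basis of A
    (bA : Module.Basis (Fin 4 ⊕ (Fin r ⊕ Fin r)) ℂ A)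
    (hbA : ∀ u, bA u = Sum.elim ![Γ0, Δ0, Γtop, Δtop] (Sum.elim Γ Δ) u) :
    let J : ℕ → Submodule ℂ A := fun k => LinearMap.ker (LinearMap.mulRight ℂ (Δ0 ^ k))
    let I0 : Submodule ℂ A := LinearMap.range (LinearMap.mulRight ℂ Δ0)
    let Hge2 : Submodule ℂ A :=
      Submodule.span ℂ ({Δ0, Γtop, Δtop} ∪ Set.range Γ ∪ Set.range Δ)
    -- the kernels J_k
    (J 1 = Submodule.span ℂ
      ({Δ0 - ∑ k, b k • Γ k, Δtop} ∪
        Set.range (fun i => (∑ j, a i j • Δ j) - b i • Γtop))) ∧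
    (J 2 = Submodule.span ℂ
      ({Γtop, Δtop} ∪ Set.range (fun i => Γ i - (bv i / κ) • Δ0) ∪ Set.range Δ)) ∧
    (J 3 = Hge2) ∧
    (J 4 = ⊤) ∧
    -- the filtration I_k = (Δ₀) + J_k
    (I0 ⊔ J 1 = Submodule.span ℂ
      ({Δ0 - ∑ k, b k • Γ k, Δ0, Γtop, Δtop} ∪ Set.range Δ)) ∧
    (I0 ⊔ J 2 = Hge2) ∧
    (I0 ⊔ J 3 = Hge2) ∧
    (I0 ⊔ J 4 = ⊤) := by
  intro J I0 Hge2
  -- basic multiplication facts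
  have hG0D0 : Γ0 * Δ0 = Δ0 := by rw [hone, one_mul]
  have hDtD0 : Δtop * Δ0 = 0 := by rw [mul_comm]; exact hD0Dt
  have hDiD0 : ∀ i, Δ i * Δ0 = bv i • Δtop := fun i => by rw [mul_comm]; exact hD0D i
  -- scalar facts
  have hbvc : ∀ i, bv i = ∑ j, b j * c i j :=
    fun i => by rw [hbv]; exact Finset.sum_congr rfl fun j _ => by rw [hcsymm]
  have habv : ∀ i, (∑ j, a i j * bv j) = b i := by
    intro i
    calc ∑ j, a i j * bv j = ∑ j, ∑ k, b k * (a i j * c k j) := by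
          simp only [hbv, Finset.mul_sum]
          exact Finset.sum_congr rfl fun j _ => Finset.sum_congr rfl fun k _ => by ring
      _ = ∑ k, b k * ∑ j, a i j * c j k := by
          rw [Finset.sum_comm]
          exact Finset.sum_congr rfl fun k _ => by
            rw [Finset.mul_sum]
            exact Finset.sum_congr rfl fun j _ => by rw [hcsymm k j]
      _ = b i := by
          simp only [hainv]
          simp
  have hCA : ∀ k j, (∑ i, c k i * a i j) = if k = j then (1:ℂ) else 0 := by
    have hM : (Matrix.of a) * (Matrix.of c) = 1 := by
      ext i j
      simpa [Matrix.mul_apply, Matrix.one_apply] using hainv i j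
    have hM' := mul_eq_one_comm.mp hM
    intro k j
    have := congrFun (congrFun hM' k) j
    simpa [Matrix.mul_apply, Matrix.one_apply] using this
  have hbex : ∃ i, b i ≠ 0 := by
    by_contra h
    push_neg at h
    exact hκne (by rw [hκ]; simp [h])
  -- powers of Δ0
  have hsq : Δ0 ^ 2 = ∑ i, b i • Δ i := by rw [sq, hD00]
  have hcube : Δ0 ^ 3 = κ • Δtop := by
    rw [pow_succ, hsq, Finset.sum_mul]
    simp only [smul_mul_assoc, hDiD0, smul_smul, ← Finset.sum_smul, hκ]
  have hp4 : Δ0 ^ 4 = 0 := by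
    rw [pow_succ, hcube, smul_mul_assoc, hDtD0, smul_zero]
  -- basis expansion helpers
  have hsum : ∀ (p : Fin 4 → ℂ) (q s : Fin r → ℂ),
      ∑ u, Sum.elim p (Sum.elim q s) u • bA u
        = p 0 • Γ0 + p 1 • Δ0 + p 2 • Γtop + p 3 • Δtop
          + (∑ i, q i • Γ i) + (∑ i, s i • Δ i) := by
    intro p q s
    rw [Fintype.sum_sum_type, Fintype.sum_sum_type, Fin.sum_univ_four]
    simp only [hbA, Sum.elim_inl, Sum.elim_inr]
    simp [Matrix.cons_val_zero, Matrix.cons_val_one]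
    abel
  have hx : ∀ x : A, ∃ (p : Fin 4 → ℂ) (q s : Fin r → ℂ),
      x = p 0 • Γ0 + p 1 • Δ0 + p 2 • Γtop + p 3 • Δtop
          + (∑ i, q i • Γ i) + (∑ i, s i • Δ i) := by
    intro x
    refine ⟨fun v => bA.repr x (.inl v), fun i => bA.repr x (.inr (.inl i)),
      fun i => bA.repr x (.inr (.inr i)), ?_⟩
    calc x = ∑ u, bA.repr x u • bA u := (bA.sum_repr x).symm
      _ = ∑ u, Sum.elim (fun v => bA.repr x (.inl v))
            (Sum.elim (fun i => bA.repr x (.inr (.inl i)))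
              (fun i => bA.repr x (.inr (.inr i)))) u • bA u := by
          apply Finset.sum_congr rfl
          rintro (u | u | u) _ <;> rfl
      _ = _ := hsum _ _ _
  have hext : ∀ (x0 x1 x2 x3 : ℂ) (q s : Fin r → ℂ),
      x0 • Γ0 + x1 • Δ0 + x2 • Γtop + x3 • Δtop
        + (∑ i, q i • Γ i) + (∑ i, s i • Δ i) = 0 →
      x0 = 0 ∧ x1 = 0 ∧ x2 = 0 ∧ x3 = 0 ∧ (∀ i, q i = 0) ∧ (∀ i, s i = 0) := by
    intro x0 x1 x2 x3 q s h
    have h2 := Fintype.linearIndependent_iff.mp bA.linearIndependent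
      (Sum.elim ![x0, x1, x2, x3] (Sum.elim q s))
      (by rw [hsum]; simpa using h)
    refine ⟨h2 (.inl 0), h2 (.inl 1), h2 (.inl 2), h2 (.inl 3),
      fun i => h2 (.inr (.inl i)), fun i => h2 (.inr (.inr i))⟩
  -- the key multiplication-in-coordinates lemma
  have hmul1 : ∀ (x0 x1 x2 x3 : ℂ) (q s : Fin r → ℂ),
      (x0 • Γ0 + x1 • Δ0 + x2 • Γtop + x3 • Δtop
        + (∑ i, q i • Γ i) + (∑ i, s i • Δ i)) * Δ0
      = (0:ℂ) • Γ0 + x0 • Δ0 + (0:ℂ) • Γtop + (x2 + ∑ i, s i * bv i) • Δtop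
        + (∑ i, (0:ℂ) • Γ i) + (∑ i, (x1 * b i + q i) • Δ i) := by
    intro x0 x1 x2 x3 q s
    simp only [add_mul, Finset.sum_mul, smul_mul_assoc, hG0D0, hD00, hTD0, hDtD0,
      hGD0, hDiD0, smul_zero, smul_smul, zero_smul, Finset.smul_sum, add_smul,
      Finset.sum_add_distrib, Finset.sum_smul, zero_add, add_zero,
      Finset.sum_const_zero]
    abel
  have hkermem : ∀ (k : ℕ) (x : A), x ∈ J k ↔ x * Δ0 ^ k = 0 := by
    intro k x
    show x ∈ LinearMap.ker (LinearMap.mulRight ℂ (Δ0 ^ k)) ↔ _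
    rw [LinearMap.mem_ker, LinearMap.mulRight_apply]
  -- J 4
  have hJ4 : J 4 = ⊤ := by
    rw [eq_top_iff]
    intro x _
    rw [hkermem, hp4, mul_zero]
  -- J 1
  have hJ1 : J 1 = Submodule.span ℂ
      ({Δ0 - ∑ k, b k • Γ k, Δtop} ∪
        Set.range (fun i => (∑ j, a i j • Δ j) - b i • Γtop)) := by
    apply le_antisymm
    · intro x hxk
      rw [hkermem, pow_one] at hxk
      obtain ⟨p, q, s, hxe⟩ := hx x
      rw [hxe, hmul1] at hxk
      obtain ⟨-, hp0, -, hp2, -, hq⟩ := hext _ _ _ _ _ _ hxk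
      have hq' : ∀ i, q i = -(p 1 * b i) := fun i => by
        linear_combination hq i
      have hp2' : p 2 = -(∑ i, s i * bv i) := by linear_combination hp2
      have key1 : ∀ j, (∑ i, (∑ k, s k * c k i) * a i j) = s j := by
        intro j
        calc ∑ i, (∑ k, s k * c k i) * a i j
            = ∑ k, s k * ∑ i, c k i * a i j := by
              simp only [Finset.sum_mul, Finset.mul_sum]
              rw [Finset.sum_comm]
              exact Finset.sum_congr rfl fun k _ => Finset.sum_congr rfl fun i _ => by ring
          _ = s j := by simp [hCA]
      have key2 : (∑ i, (∑ k, s k * c k i) * b i) = ∑ k, s k * bv k := by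
        simp only [Finset.sum_mul]
        rw [Finset.sum_comm]
        refine Finset.sum_congr rfl fun k _ => ?_
        rw [hbvc k, Finset.mul_sum]
        exact Finset.sum_congr rfl fun i _ => by ring
      have e1 : ∑ i, (∑ k, s k * c k i) • ((∑ j, a i j • Δ j) - b i • Γtop)
          = (∑ j, s j • Δ j) - (∑ k, s k * bv k) • Γtop := by
        simp only [smul_sub, Finset.smul_sum, smul_smul, Finset.sum_sub_distrib]
        congr 1
        · rw [Finset.sum_comm]
          exact Finset.sum_congr rfl fun j _ => by rw [← Finset.sum_smul, key1 j]
        · rw [← Finset.sum_smul, key2]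
      have hmem : x = p 1 • (Δ0 - ∑ k, b k • Γ k) + p 3 • Δtop
          + ∑ i, (∑ k, s k * c k i) • ((∑ j, a i j • Δ j) - b i • Γtop) := by
        rw [hxe, e1, hp0, hp2']
        rw [Finset.sum_congr rfl (fun i _ => by rw [hq' i, neg_smul] :
          ∀ i ∈ Finset.univ, q i • Γ i = -((p 1 * b i) • Γ i))]
        simp only [zero_smul, zero_add, smul_sub, Finset.smul_sum, smul_smul, neg_smul,
          Finset.sum_neg_distrib]
        abel
      rw [hmem]
      refine Submodule.add_mem _ (Submodule.add_mem _ ?_ ?_) ?_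
      · exact Submodule.smul_mem _ _ (Submodule.subset_span
          (Set.mem_union_left _ (Set.mem_insert _ _)))
      · exact Submodule.smul_mem _ _ (Submodule.subset_span
          (Set.mem_union_left _ (Set.mem_insert_of_mem _ rfl)))
      · exact Submodule.sum_mem _ fun i _ => Submodule.smul_mem _ _
          (Submodule.subset_span (Set.mem_union_right _ ⟨i, rfl⟩))
    · rw [Submodule.span_le]
      rintro y (hy | ⟨i, rfl⟩)
      · rcases hy with rfl | rfl
        · rw [SetLike.mem_coe, hkermem, pow_one, sub_mul, hD00, Finset.sum_mul]
          simp [smul_mul_assoc, hGD0]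
        · rw [SetLike.mem_coe, hkermem, pow_one, hDtD0]
      · rw [SetLike.mem_coe, hkermem, pow_one, sub_mul, Finset.sum_mul]
        simp only [smul_mul_assoc, hDiD0, hTD0, smul_smul, ← Finset.sum_smul, habv]
        rw [sub_self]
  have hDtDi : ∀ i, Δtop * Δ i = 0 := fun i => by rw [mul_comm]; exact hDDt i
  -- J 2
  have hJ2 : J 2 = Submodule.span ℂ
      ({Γtop, Δtop} ∪ Set.range (fun i => Γ i - (bv i / κ) • Δ0) ∪ Set.range Δ) := by
    apply le_antisymm
    · intro x hxk
      rw [hkermem] at hxk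
      obtain ⟨p, q, s, hxe⟩ := hx x
      rw [show (2:ℕ) = 1+1 from rfl, pow_add, pow_one, ← mul_assoc, hxe,
        hmul1, hmul1] at hxk
      obtain ⟨-, -, -, ht, -, hd⟩ := hext _ _ _ _ _ _ hxk
      obtain ⟨i0, hi0⟩ := hbex
      have hp0 : p 0 = 0 := by
        have h' := hd i0
        rw [add_zero, mul_eq_zero] at h'
        exact h'.resolve_right hi0
      have ht' : p 1 * κ + ∑ i, q i * bv i = 0 := by
        rw [hκ]
        calc p 1 * (∑ i, b i * bv i) + ∑ i, q i * bv i
            = ∑ i, (p 1 * b i + q i) * bv i := by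
              rw [Finset.mul_sum, ← Finset.sum_add_distrib]
              exact Finset.sum_congr rfl fun i _ => by ring
          _ = 0 := by linear_combination ht
      have hcoef : ∑ i, q i * (bv i / κ) = -(p 1) := by
        rw [show ∑ i, q i * (bv i / κ) = (∑ i, q i * bv i) / κ from by
          rw [Finset.sum_div]; exact Finset.sum_congr rfl fun i _ => by ring]
        rw [show ∑ i, q i * bv i = -(p 1 * κ) from by linear_combination ht']
        field_simp
      have hmem : x = (∑ i, q i • (Γ i - (bv i / κ) • Δ0)) + p 2 • Γtop
          + p 3 • Δtop + ∑ i, s i • Δ i := by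
        rw [hxe, hp0, zero_smul, zero_add]
        simp only [smul_sub, smul_smul, Finset.sum_sub_distrib, ← Finset.sum_smul,
          hcoef, neg_smul]
        abel
      rw [hmem]
      refine Submodule.add_mem _ (Submodule.add_mem _ (Submodule.add_mem _ ?_ ?_) ?_) ?_
      · exact Submodule.sum_mem _ fun i _ => Submodule.smul_mem _ _
          (Submodule.subset_span (Set.mem_union_left _ (Set.mem_union_right _ ⟨i, rfl⟩)))
      · exact Submodule.smul_mem _ _ (Submodule.subset_span
          (Set.mem_union_left _ (Set.mem_union_left _ (Set.mem_insert _ _))))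
      · exact Submodule.smul_mem _ _ (Submodule.subset_span
          (Set.mem_union_left _ (Set.mem_union_left _ (Set.mem_insert_of_mem _ rfl))))
      · exact Submodule.sum_mem _ fun i _ => Submodule.smul_mem _ _
          (Submodule.subset_span (Set.mem_union_right _ ⟨i, rfl⟩))
    · rw [Submodule.span_le]
      have e3 : Δ0 * (∑ j, b j • Δ j) = κ • Δtop := by
        calc Δ0 * (∑ j, b j • Δ j) = Δ0 * Δ0 ^ 2 := by rw [hsq]
          _ = Δ0 ^ 3 := by ring
          _ = κ • Δtop := hcube
      rintro y ((hy | ⟨i, rfl⟩) | ⟨i, rfl⟩)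
      · rcases hy with rfl | rfl
        · rw [SetLike.mem_coe, hkermem, hsq, Finset.mul_sum]
          simp [mul_smul_comm, hTD]
        · rw [SetLike.mem_coe, hkermem, hsq, Finset.mul_sum]
          simp [mul_smul_comm, hDtDi]
      · rw [SetLike.mem_coe, hkermem, hsq]
        have e2 : Γ i * (∑ j, b j • Δ j) = bv i • Δtop := by
          rw [Finset.mul_sum]
          simp only [mul_smul_comm, hGD, smul_smul, ← Finset.sum_smul]
          rw [← hbvc i]
        rw [sub_mul, e2, smul_mul_assoc, e3, smul_smul, div_mul_cancel₀ _ hκne, sub_self]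
      · rw [SetLike.mem_coe, hkermem, hsq, Finset.mul_sum]
        simp [mul_smul_comm, hDD]
  -- J 3
  have hJ3 : J 3 = Hge2 := by
    apply le_antisymm
    · intro x hxk
      rw [hkermem] at hxk
      obtain ⟨p, q, s, hxe⟩ := hx x
      rw [show (3:ℕ) = 1+1+1 from rfl, pow_add, pow_add, pow_one, ← mul_assoc,
        ← mul_assoc, hxe, hmul1, hmul1, hmul1] at hxk
      obtain ⟨-, -, -, ht, -, -⟩ := hext _ _ _ _ _ _ hxk
      have hp0 : p 0 = 0 := by
        have h' : p 0 * κ = 0 := by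
          rw [hκ, Finset.mul_sum]
          calc ∑ i, p 0 * (b i * bv i) = 0 + ∑ i, (p 0 * b i + 0) * bv i := by
                rw [zero_add]
                exact Finset.sum_congr rfl fun i _ => by ring
            _ = 0 := ht
        rcases mul_eq_zero.mp h' with h | h
        · exact h
        · exact absurd h hκne
      rw [hxe, hp0, zero_smul, zero_add]
      refine Submodule.add_mem _ (Submodule.add_mem _ (Submodule.add_mem _
        (Submodule.add_mem _ ?_ ?_) ?_) ?_) ?_
      · exact Submodule.smul_mem _ _ (Submodule.subset_span
          (Set.mem_union_left _ (Set.mem_union_left _ (Set.mem_insert _ _))))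
      · exact Submodule.smul_mem _ _ (Submodule.subset_span
          (Set.mem_union_left _ (Set.mem_union_left _
            (Set.mem_insert_of_mem _ (Set.mem_insert _ _)))))
      · exact Submodule.smul_mem _ _ (Submodule.subset_span
          (Set.mem_union_left _ (Set.mem_union_left _
            (Set.mem_insert_of_mem _ (Set.mem_insert_of_mem _ rfl)))))
      · exact Submodule.sum_mem _ fun i _ => Submodule.smul_mem _ _
          (Submodule.subset_span (Set.mem_union_left _ (Set.mem_union_right _ ⟨i, rfl⟩)))
      · exact Submodule.sum_mem _ fun i _ => Submodule.smul_mem _ _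
          (Submodule.subset_span (Set.mem_union_right _ ⟨i, rfl⟩))
    · rw [Submodule.span_le]
      rintro y ((hy | ⟨i, rfl⟩) | ⟨i, rfl⟩)
      · rcases hy with rfl | rfl | rfl
        · rw [SetLike.mem_coe, hkermem, hcube, mul_smul_comm, hD0Dt, smul_zero]
        · rw [SetLike.mem_coe, hkermem, hcube, mul_smul_comm, hTDt, smul_zero]
        · rw [SetLike.mem_coe, hkermem, hcube, mul_smul_comm, hDtDt, smul_zero]
      · rw [SetLike.mem_coe, hkermem, hcube, mul_smul_comm, hGDt, smul_zero]
      · rw [SetLike.mem_coe, hkermem, hcube, mul_smul_comm, hDDt, smul_zero]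
  -- I0 facts
  have hI0mem : ∀ y : A, y * Δ0 ∈ I0 := fun y =>
    ⟨y, LinearMap.mulRight_apply ℂ Δ0 y⟩
  have hD0I0 : Δ0 ∈ I0 := by
    have := hI0mem 1; rwa [one_mul] at this
  have hDtI0 : Δtop ∈ I0 := by
    have := hI0mem Γtop; rwa [hTD0] at this
  have hDiI0 : ∀ i, Δ i ∈ I0 := fun i => by
    have := hI0mem (Γ i); rwa [hGD0] at this
  have hI0span : I0 ≤ Submodule.span ℂ (({Δ0, Δtop} ∪ Set.range Δ : Set A)) := by
    rintro x ⟨y, rfl⟩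
    rw [LinearMap.mulRight_apply]
    obtain ⟨p, q, s, hye⟩ := hx y
    rw [hye, hmul1]
    simp only [zero_smul, zero_add, add_zero, Finset.sum_const_zero]
    refine Submodule.add_mem _ (Submodule.add_mem _ ?_ ?_) ?_
    · exact Submodule.smul_mem _ _ (Submodule.subset_span
        (Set.mem_union_left _ (Set.mem_insert _ _)))
    · exact Submodule.smul_mem _ _ (Submodule.subset_span
        (Set.mem_union_left _ (Set.mem_insert_of_mem _ rfl)))
    · exact Submodule.sum_mem _ fun i _ => Submodule.smul_mem _ _
        (Submodule.subset_span (Set.mem_union_right _ ⟨i, rfl⟩))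
  -- I0 ⊔ J 1
  have hF1 : I0 ⊔ J 1 = Submodule.span ℂ
      ({Δ0 - ∑ k, b k • Γ k, Δ0, Γtop, Δtop} ∪ Set.range Δ) := by
    apply le_antisymm
    · refine sup_le (hI0span.trans (Submodule.span_mono ?_)) ?_
      · rintro z (hz | hz)
        · rcases hz with rfl | rfl
          · exact Set.mem_union_left _ (by simp)
          · exact Set.mem_union_left _ (by simp)
        · exact Set.mem_union_right _ hz
      · rw [hJ1, Submodule.span_le]
        rintro y (hy | ⟨i, rfl⟩)
        · rcases hy with rfl | rfl
          · exact Submodule.subset_span (Set.mem_union_left _ (by simp))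
          · exact Submodule.subset_span (Set.mem_union_left _ (by simp))
        · refine Submodule.sub_mem _ ?_ ?_
          · exact Submodule.sum_mem _ fun j _ => Submodule.smul_mem _ _
              (Submodule.subset_span (Set.mem_union_right _ ⟨j, rfl⟩))
          · exact Submodule.smul_mem _ _
              (Submodule.subset_span (Set.mem_union_left _ (by simp)))
    · rw [Submodule.span_le]
      have hJ1mem : ∀ z ∈ ({Δ0 - ∑ k, b k • Γ k, Δtop} ∪
          Set.range (fun i => (∑ j, a i j • Δ j) - b i • Γtop) : Set A), z ∈ J 1 := by
        intro z hz
        rw [hJ1]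
        exact Submodule.subset_span hz
      rintro y (hy | ⟨i, rfl⟩)
      · rcases hy with h | h | h | h
        · rw [h]
          exact SetLike.mem_coe.mpr (Submodule.mem_sup_right
            (hJ1mem _ (Set.mem_union_left _ (by simp))))
        · rw [h]
          exact SetLike.mem_coe.mpr (Submodule.mem_sup_left hD0I0)
        · -- Γtop
          rw [h, SetLike.mem_coe]
          obtain ⟨i0, hi0⟩ := hbex
          have h2 : (∑ j, a i0 j • Δ j) - b i0 • Γtop ∈ I0 ⊔ J 1 :=
            Submodule.mem_sup_right (hJ1mem _ (Set.mem_union_right _ ⟨i0, rfl⟩))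
          have h1 : (∑ j, a i0 j • Δ j) ∈ I0 ⊔ J 1 :=
            Submodule.sum_mem _ fun j _ => Submodule.smul_mem _ _
              (Submodule.mem_sup_left (hDiI0 j))
          have h3 : b i0 • Γtop ∈ I0 ⊔ J 1 := by
            have := Submodule.sub_mem _ h1 h2
            rwa [sub_sub_cancel] at this
          have h4 := Submodule.smul_mem _ (b i0)⁻¹ h3
          rwa [smul_smul, inv_mul_cancel₀ hi0, one_smul] at h4
        · rw [h]
          exact SetLike.mem_coe.mpr (Submodule.mem_sup_left hDtI0)
      · exact SetLike.mem_coe.mpr (Submodule.mem_sup_left (hDiI0 i))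
  -- I0 ⊔ J 2
  have hF2 : I0 ⊔ J 2 = Hge2 := by
    apply le_antisymm
    · refine sup_le (hI0span.trans (Submodule.span_mono ?_)) ?_
      · rintro z (hz | hz)
        · rcases hz with rfl | rfl
          · exact Set.mem_union_left _ (Set.mem_union_left _ (by simp))
          · exact Set.mem_union_left _ (Set.mem_union_left _ (by simp))
        · exact Set.mem_union_right _ hz
      · rw [hJ2, Submodule.span_le]
        rintro y ((hy | ⟨i, rfl⟩) | ⟨i, rfl⟩)
        · rcases hy with rfl | rfl
          · exact Submodule.subset_span (Set.mem_union_left _ (Set.mem_union_left _ (by simp)))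
          · exact Submodule.subset_span (Set.mem_union_left _ (Set.mem_union_left _ (by simp)))
        · refine Submodule.sub_mem _ ?_ ?_
          · exact Submodule.subset_span (Set.mem_union_left _ (Set.mem_union_right _ ⟨i, rfl⟩))
          · exact Submodule.smul_mem _ _ (Submodule.subset_span
              (Set.mem_union_left _ (Set.mem_union_left _ (by simp))))
        · exact Submodule.subset_span (Set.mem_union_right _ ⟨i, rfl⟩)
    · rw [show Hge2 = Submodule.span ℂ
        ({Δ0, Γtop, Δtop} ∪ Set.range Γ ∪ Set.range Δ) from rfl, Submodule.span_le]
      have hJ2mem : ∀ z ∈ ({Γtop, Δtop} ∪ Set.range (fun i => Γ i - (bv i / κ) • Δ0) ∪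
          Set.range Δ : Set A), z ∈ J 2 := by
        intro z hz
        rw [hJ2]
        exact Submodule.subset_span hz
      rintro y ((hy | ⟨i, rfl⟩) | ⟨i, rfl⟩)
      · rcases hy with h | h | h
        · rw [h]
          exact SetLike.mem_coe.mpr (Submodule.mem_sup_left hD0I0)
        · rw [h]
          exact SetLike.mem_coe.mpr (Submodule.mem_sup_right
            (hJ2mem _ (Set.mem_union_left _ (Set.mem_union_left _ (by simp)))))
        · rw [h]
          exact SetLike.mem_coe.mpr (Submodule.mem_sup_left hDtI0)
      · rw [SetLike.mem_coe]
        have h1 : Γ i - (bv i / κ) • Δ0 ∈ I0 ⊔ J 2 := Submodule.mem_sup_right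
          (hJ2mem _ (Set.mem_union_left _ (Set.mem_union_right _ ⟨i, rfl⟩)))
        have h2 : (bv i / κ) • Δ0 ∈ I0 ⊔ J 2 :=
          Submodule.smul_mem _ _ (Submodule.mem_sup_left hD0I0)
        have := Submodule.add_mem _ h1 h2
        rwa [sub_add_cancel] at this
      · exact SetLike.mem_coe.mpr (Submodule.mem_sup_left (hDiI0 i))
  -- I0 ⊔ J 3
  have hF3 : I0 ⊔ J 3 = Hge2 := by
    rw [hJ3]
    refine le_antisymm (sup_le ?_ le_rfl) le_sup_right
    refine hI0span.trans (Submodule.span_mono ?_)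
    rintro z (hz | hz)
    · rcases hz with rfl | rfl
      · exact Set.mem_union_left _ (Set.mem_union_left _ (by simp))
      · exact Set.mem_union_left _ (Set.mem_union_left _ (by simp))
    · exact Set.mem_union_right _ hz
  have hF4 : I0 ⊔ J 4 = ⊤ := by rw [hJ4, sup_top_eq]
  exact ⟨hJ1, hJ2, hJ3, hJ4, hF1, hF2, hF3, hF4⟩
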